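/- For each 1 ≤ i ≤ N let α_i : ℝ → ℝ be continuous, strictly increasing, onto, with α_i(0) = 0. Then for all (x_1,...,x_N) ∈ ℝ^N: ∑_{1≤i<j≤N} x_i x_j ≤ ∑_{i=1}^N ∫_0^{x_i} (∑_{k≠i} α_k(α_i^{-1}(t))) dt, with equality if and only if x_j = α_j(α_i^{-1}(x_i)) for all 1 ≤ i < j ≤ N (equivalently: there exists t ∈ ℝ with x_i = α_i(t) for all i). -/

import Mathlib

open scoped BigOperators
open intervalIntegral

-- Auxiliary: Young's inequality for increasing functions, with equality condition.
theorem young_pair_aux (g g' : ℝ → ℝ) (hg : Continuous g) (hm : StrictMono g)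
    (hs : Function.Surjective g) (h0 : g 0 = 0)
    (hli : Function.LeftInverse g' g) (hri : Function.RightInverse g' g) (a b : ℝ) :
    a * b ≤ (∫ t in (0:ℝ)..a, g t) + ∫ t in (0:ℝ)..b, g' t ∧
    ((a * b = (∫ t in (0:ℝ)..a, g t) + ∫ t in (0:ℝ)..b, g' t) ↔ b = g a) := by
  -- basic facts about g'
  have hm' : StrictMono g' := fun y1 y2 h => by
    have h2 : g (g' y1) < g (g' y2) := by rwa [hri, hri]
    exact hm.lt_iff_lt.mp h2
  set e := StrictMono.orderIsoOfSurjective g hm hs with he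
  have hg'eq : ∀ y, g' y = e.symm y := fun y => by
    have h1 : g (e.symm y) = y := StrictMono.orderIsoOfSurjective_self_symm_apply g hm hs y
    conv_lhs => rw [← h1]
    exact hli _
  have hg' : Continuous g' := by
    have : g' = ⇑e.symm := funext hg'eq
    rw [this]; exact OrderIso.continuous _
  have hg'0 : g' 0 = 0 := by have := hli 0; rwa [h0] at this
  set I : ℝ → ℝ := fun y => ∫ t in (0:ℝ)..y, g' t with hIdef
  have hI : ∀ y, HasDerivAt I (g' y) y := fun y =>
    (hg'.integral_hasStrictDerivAt 0 y).hasDerivAt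
  set φ : ℝ → ℝ := fun a => I (g a) - a * g a with hφdef
  -- key bound
  have star : ∀ a0 a : ℝ, |φ a - φ a0 + g a0 * (a - a0)| ≤ |g a - g a0| * |a - a0| := by
    intro a0 a
    have hdiff : I (g a) - I (g a0) = ∫ t in (g a0)..(g a), g' t :=
      integral_interval_sub_left (hg'.intervalIntegrable _ _) (hg'.intervalIntegrable _ _)
    set u := ∫ t in (g a0)..(g a), g' t with hu
    have hE : φ a - φ a0 + g a0 * (a - a0)
        = u - (a * g a - a0 * g a0) + g a0 * (a - a0) := by
      simp only [hφdef]; rw [← hdiff]; ring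
    rcases le_total a0 a with hle | hle
    · have hgle : g a0 ≤ g a := hm.le_iff_le.mpr hle
      have hub : u ≤ (g a - g a0) * a := by
        have h1 : u ≤ ∫ _t in (g a0)..(g a), a := by
          apply integral_mono_on hgle (hg'.intervalIntegrable _ _) intervalIntegrable_const
          intro t ht
          have : g' t ≤ g' (g a) := hm'.monotone ht.2
          rwa [hli] at this
        simpa using h1
      have hlb : (g a - g a0) * a0 ≤ u := by
        have h1 : (∫ _t in (g a0)..(g a), a0) ≤ u := by
          apply integral_mono_on hgle intervalIntegrable_const (hg'.intervalIntegrable _ _)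
          intro t ht
          have : g' (g a0) ≤ g' t := hm'.monotone ht.1
          rwa [hli] at this
        simpa using h1
      have h4 : |g a - g a0| = g a - g a0 := abs_of_nonneg (by linarith)
      have h5 : |a - a0| = a - a0 := abs_of_nonneg (by linarith)
      rw [hE, h4, h5, abs_le]
      constructor <;> nlinarith
    · have hgle : g a ≤ g a0 := hm.le_iff_le.mpr hle
      have hub : -u ≤ (g a0 - g a) * a0 := by
        have h1 : (∫ t in (g a)..(g a0), g' t) ≤ ∫ _t in (g a)..(g a0), a0 := by
          apply integral_mono_on hgle (hg'.intervalIntegrable _ _) intervalIntegrable_const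
          intro t ht
          have : g' t ≤ g' (g a0) := hm'.monotone ht.2
          rwa [hli] at this
        rw [hu, integral_symm]
        simpa using h1
      have hlb : (g a0 - g a) * a ≤ -u := by
        have h1 : (∫ _t in (g a)..(g a0), a) ≤ ∫ t in (g a)..(g a0), g' t := by
          apply integral_mono_on hgle intervalIntegrable_const (hg'.intervalIntegrable _ _)
          intro t ht
          have : g' (g a) ≤ g' t := hm'.monotone ht.1
          rwa [hli] at this
        rw [hu, integral_symm]
        simpa using h1
      have h4 : |g a - g a0| = -(g a - g a0) := abs_of_nonpos (by linarith)
      have h5 : |a - a0| = -(a - a0) := abs_of_nonpos (by linarith)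
      rw [hE, h4, h5, abs_le]
      constructor <;> nlinarith
  -- derivative of φ
  have hφ : ∀ a0 : ℝ, HasDerivAt φ (-(g a0)) a0 := by
    intro a0
    rw [hasDerivAt_iff_isLittleO, Asymptotics.isLittleO_iff]
    intro c hc
    have h1 : ∀ᶠ x in nhds a0, |g x - g a0| < c := by
      have ht : Filter.Tendsto (fun x => |g x - g a0|) (nhds a0) (nhds |g a0 - g a0|) :=
        ((hg.tendsto a0).sub tendsto_const_nhds).abs
      simp only [sub_self, abs_zero] at ht
      exact ht.eventually_lt_const hc
    filter_upwards [h1] with x hx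
    have h2 := star a0 x
    have h3 : ‖φ x - φ a0 - (x - a0) • (-(g a0))‖ = |φ x - φ a0 + g a0 * (x - a0)| := by
      simp [smul_eq_mul]; ring_nf
    rw [h3, Real.norm_eq_abs]
    calc |φ x - φ a0 + g a0 * (x - a0)| ≤ |g x - g a0| * |x - a0| := h2
      _ ≤ c * |x - a0| := by
          apply mul_le_mul_of_nonneg_right (le_of_lt hx) (abs_nonneg _)
  -- W ≡ 0 : the inverse-function integral identity
  have hW : ∀ a : ℝ, HasDerivAt (fun a => (∫ t in (0:ℝ)..a, g t) + φ a) 0 a := by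
    intro a
    have h1 := ((hg.integral_hasStrictDerivAt 0 a).hasDerivAt).add (hφ a)
    exact h1.congr_deriv (by ring)
  have identity : ∀ a : ℝ, (∫ t in (0:ℝ)..a, g t) + I (g a) = a * g a := by
    intro a
    have hconst := is_const_of_deriv_eq_zero (𝕜 := ℝ)
      (f := fun a => (∫ t in (0:ℝ)..a, g t) + φ a)
      (fun x => (hW x).differentiableAt) (fun x => (hW x).deriv) a 0
    simp only [hφdef, hIdef, h0, integral_same, mul_zero, zero_mul, sub_zero, add_zero,
      zero_add] at hconst
    linarith [hconst]
  -- the function Ψ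
  set Ψ : ℝ → ℝ := fun a => (∫ t in (0:ℝ)..a, g t) + I b - a * b with hΨdef
  have hΨ : ∀ a : ℝ, HasDerivAt Ψ (g a - b) a := by
    intro a
    have h1 := (((hg.integral_hasStrictDerivAt 0 a).hasDerivAt).add_const (I b)).sub
      (hasDerivAt_mul_const b)
    exact h1
  set a0 := g' b with ha0
  have hga0 : g a0 = b := hri b
  have hΨa0 : Ψ a0 = 0 := by
    simp only [hΨdef, ← hga0]
    have := identity a0
    linarith
  have hΨdiff : Differentiable ℝ Ψ := fun t => (hΨ t).differentiableAt
  have hpos : ∀ a : ℝ, a ≠ a0 → 0 < Ψ a := by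
    intro a hne
    rcases lt_or_gt_of_ne hne with hlt | hgt
    · -- a < a0 : Ψ strictly decreasing on [a, a0]
      have hanti : StrictAntiOn Ψ (Set.Icc a a0) := by
        apply strictAntiOn_of_deriv_neg (convex_Icc a a0) hΨdiff.continuous.continuousOn
        intro t ht
        rw [interior_Icc] at ht
        rw [(hΨ t).deriv]
        have : g t < g a0 := hm ht.2
        rw [hga0] at this; linarith
      have := hanti (Set.left_mem_Icc.mpr hlt.le) (Set.right_mem_Icc.mpr hlt.le) hlt
      rw [hΨa0] at this; linarith
    · have hmono2 : StrictMonoOn Ψ (Set.Icc a0 a) := by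
        apply strictMonoOn_of_deriv_pos (convex_Icc a0 a) hΨdiff.continuous.continuousOn
        intro t ht
        rw [interior_Icc] at ht
        rw [(hΨ t).deriv]
        have : g a0 < g t := hm ht.1
        rw [hga0] at this; linarith
      have := hmono2 (Set.left_mem_Icc.mpr hgt.le) (Set.right_mem_Icc.mpr hgt.le) hgt
      rw [hΨa0] at this; linarith
  have hineq : a * b ≤ (∫ t in (0:ℝ)..a, g t) + ∫ t in (0:ℝ)..b, g' t := by
    rcases eq_or_ne a a0 with rfl | hne
    · have := hΨa0; simp only [hΨdef, hIdef] at this ⊢; linarith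
    · have := hpos a hne; simp only [hΨdef, hIdef] at this ⊢; linarith
  refine ⟨hineq, ?_, ?_⟩
  · intro heq
    by_contra hne
    have hne' : a ≠ a0 := by
      intro h; subst h; rw [← hga0] at hne; exact hne rfl
    have := hpos a hne'
    simp only [hΨdef, hIdef] at this
    linarith
  · intro heq
    have haa0 : a = a0 := by rw [ha0, heq, hli]
    subst haa0
    have := hΨa0; simp only [hΨdef, hIdef] at this; linarith

theorem multi_marginal_young_inequality
    {N : ℕ} (hN : 2 ≤ N) (α β : Fin N → ℝ → ℝ)
    (hcont : ∀ i, Continuous (α i))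
    (hmono : ∀ i, StrictMono (α i))
    (hsurj : ∀ i, Function.Surjective (α i))
    (hzero : ∀ i, α i 0 = 0)
    -- `β i` is the inverse function of `α i`:
    (hinv : ∀ i, Function.LeftInverse (β i) (α i) ∧ Function.RightInverse (β i) (α i))
    (x : Fin N → ℝ) :
    ((∑ i, ∑ j ∈ Finset.Ioi i, x i * x j) ≤
        ∑ i, ∫ t in (0 : ℝ)..(x i), ∑ k ∈ Finset.univ.erase i, α k (β i t)) ∧
      ((∑ i, ∑ j ∈ Finset.Ioi i, x i * x j) =
          (∑ i, ∫ t in (0 : ℝ)..(x i), ∑ k ∈ Finset.univ.erase i, α k (β i t)) ↔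
        ∃ t : ℝ, ∀ i, x i = α i t) := by
  classical
  have hβli : ∀ i, Function.LeftInverse (β i) (α i) := fun i => (hinv i).1
  have hβri : ∀ i, Function.RightInverse (β i) (α i) := fun i => (hinv i).2
  have hβmono : ∀ i, StrictMono (β i) := fun i y1 y2 h => by
    have h2 : α i (β i y1) < α i (β i y2) := by rwa [hβri i, hβri i]
    exact (hmono i).lt_iff_lt.mp h2
  have hβcont : ∀ i, Continuous (β i) := fun i => by
    have h : β i = ⇑((hmono i).orderIsoOfSurjective _ (hsurj i)).symm := funext fun y => by
      have h1 : α i (((hmono i).orderIsoOfSurjective _ (hsurj i)).symm y) = y :=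
        StrictMono.orderIsoOfSurjective_self_symm_apply _ _ (hsurj i) y
      conv_lhs => rw [← h1]
      exact hβli i _
    rw [h]; exact OrderIso.continuous _
  have hβ0 : ∀ i, β i 0 = 0 := fun i => by
    have := hβli i 0; rwa [hzero i] at this
  set A : Fin N → Fin N → ℝ := fun i k => ∫ t in (0:ℝ)..(x i), α k (β i t) with hA
  have key : ∀ i j : Fin N,
      x i * x j ≤ A i j + A j i ∧ (x i * x j = A i j + A j i ↔ x j = α j (β i (x i))) := by
    intro i j
    exact young_pair_aux (fun t => α j (β i t)) (fun t => α i (β j t))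
      ((hcont j).comp (hβcont i)) ((hmono j).comp (hβmono i))
      ((hsurj j).comp (hβli i).surjective)
      (by show α j (β i 0) = 0; rw [hβ0 i, hzero j])
      (fun t => by simp only []; rw [hβli j, hβri i])
      (fun t => by simp only []; rw [hβli i, hβri j])
      (x i) (x j)
  have hrw : ∀ i : Fin N, (∫ t in (0:ℝ)..(x i), ∑ k ∈ Finset.univ.erase i, α k (β i t))
      = ∑ k ∈ Finset.univ.erase i, A i k := fun i =>
    intervalIntegral.integral_finset_sum
      (fun k _ => (((hcont k).comp (hβcont i)).intervalIntegrable _ _))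
  have herase : ∀ i : Fin N, Finset.univ.erase i = Finset.Ioi i ∪ Finset.Iio i := by
    intro i; ext k
    simp only [Finset.mem_erase, Finset.mem_union, Finset.mem_Ioi, Finset.mem_Iio,
      Finset.mem_univ, and_true]
    constructor
    · intro h; rcases lt_or_gt_of_ne h with h | h
      · exact Or.inr h
      · exact Or.inl h
    · rintro (h | h)
      · exact ne_of_gt h
      · exact ne_of_lt h
  have hdisj : ∀ i : Fin N, Disjoint (Finset.Ioi i) (Finset.Iio i) := fun i => by
    rw [Finset.disjoint_left]
    intro k h1 h2
    exact absurd (Finset.mem_Ioi.mp h1) (not_lt.mpr (le_of_lt (Finset.mem_Iio.mp h2)))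
  have hRHS : (∑ i, ∫ t in (0:ℝ)..(x i), ∑ k ∈ Finset.univ.erase i, α k (β i t))
      = ∑ i, ∑ j ∈ Finset.Ioi i, (A i j + A j i) := by
    calc (∑ i, ∫ t in (0:ℝ)..(x i), ∑ k ∈ Finset.univ.erase i, α k (β i t))
        = ∑ i, ∑ k ∈ Finset.univ.erase i, A i k := Finset.sum_congr rfl fun i _ => hrw i
      _ = ∑ i, (∑ k ∈ Finset.Ioi i, A i k + ∑ k ∈ Finset.Iio i, A i k) :=
          Finset.sum_congr rfl fun i _ => by rw [herase i, Finset.sum_union (hdisj i)]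
      _ = (∑ i, ∑ k ∈ Finset.Ioi i, A i k) + ∑ i, ∑ k ∈ Finset.Iio i, A i k :=
          Finset.sum_add_distrib
      _ = (∑ i, ∑ k ∈ Finset.Ioi i, A i k) + ∑ k, ∑ i ∈ Finset.Ioi k, A i k := by
          congr 1
          exact Finset.sum_comm' fun i k => by
            simp [Finset.mem_Iio, Finset.mem_Ioi]
      _ = ∑ i, ∑ j ∈ Finset.Ioi i, (A i j + A j i) := by
          rw [← Finset.sum_add_distrib]
          exact Finset.sum_congr rfl fun i _ => by rw [← Finset.sum_add_distrib]
  rw [hRHS,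
    Finset.sum_sigma' Finset.univ (fun i => Finset.Ioi i) (fun i j => x i * x j),
    Finset.sum_sigma' Finset.univ (fun i => Finset.Ioi i) (fun i j => A i j + A j i)]
  set S := (Finset.univ : Finset (Fin N)).sigma fun i => Finset.Ioi i with hS
  have hle : ∀ p ∈ S, x p.1 * x p.2 ≤ A p.1 p.2 + A p.2 p.1 := fun p _ => (key p.1 p.2).1
  refine ⟨Finset.sum_le_sum hle, ?_⟩
  rw [Finset.sum_eq_sum_iff_of_le hle]
  constructor
  · intro h
    have hN0 : 0 < N := by omega
    set i0 : Fin N := ⟨0, hN0⟩ with hi0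
    refine ⟨β i0 (x i0), fun i => ?_⟩
    by_cases hi : i = i0
    · subst hi; exact (hβri i0 (x i0)).symm
    · have hlt : i0 < i := by
        rw [Fin.lt_def]
        exact Nat.pos_of_ne_zero fun h0 => hi (Fin.ext h0)
      have hp : (⟨i0, i⟩ : Σ _ : Fin N, Fin N) ∈ S :=
        Finset.mem_sigma.mpr ⟨Finset.mem_univ _, Finset.mem_Ioi.mpr hlt⟩
      exact (key i0 i).2.mp (h _ hp)
  · rintro ⟨t, ht⟩ p _
    apply (key p.1 p.2).2.mpr
    rw [ht p.2, ht p.1, hβli p.1]
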